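/- In the same setting (A the incidence algebra of a finite poset given by a bound quiver with full commutativity relations), every submodule of an interval module V_I is interval decomposable. -/

import Mathlib

set_option linter.unusedSectionVars false

open scoped Classical

/-- A persistence module over the poset `P`: a functor `P → Vect_k`.
(This models pointwise finite modules over the incidence algebra `A = kQ/ρ` of the poset.) -/
structure PersMod (k P : Type) [Field k] [PartialOrder P] where
  V : P → Type
  [acg : ∀ a, AddCommGroup (V a)]
  [mod : ∀ a, Module k (V a)]
  map : ∀ {a b : P}, a ≤ b → (V a →ₗ[k] V b)
  map_id : ∀ a : P, map (le_refl a) = LinearMap.id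
  map_comp : ∀ {a b c : P} (h₁ : a ≤ b) (h₂ : b ≤ c),
    (map h₂).comp (map h₁) = map (h₁.trans h₂)

attribute [instance] PersMod.acg PersMod.mod

variable {k P : Type} [Field k] [PartialOrder P]

/-- Morphisms of persistence modules, as a `k`-submodule of the product of Hom-spaces. -/
def PersHomSub (M N : PersMod k P) :
    Submodule k (∀ a : P, M.V a →ₗ[k] N.V a) where
  carrier := {f | ∀ ⦃a b : P⦄ (h : a ≤ b), (N.map h).comp (f a) = (f b).comp (M.map h)}
  add_mem' := by
    intro f g hf hg a b h
    simp only [Pi.add_apply, LinearMap.comp_add, LinearMap.add_comp, hf h, hg h]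
  zero_mem' := by intro a b h; simp
  smul_mem' := by
    intro c f hf a b h
    simp only [Pi.smul_apply, LinearMap.comp_smul, LinearMap.smul_comp, hf h]

/-- The space of morphisms `M → N` of persistence modules. -/
def PersHom (M N : PersMod k P) : Type := ↥(PersHomSub M N)

noncomputable instance (M N : PersMod k P) : AddCommGroup (PersHom M N) :=
  inferInstanceAs (AddCommGroup ↥(PersHomSub M N))
noncomputable instance (M N : PersMod k P) : Module k (PersHom M N) :=
  inferInstanceAs (Module k ↥(PersHomSub M N))

/-- Composition of morphisms of persistence modules. -/
def PersHom.comp {M N O : PersMod k P} (g : PersHom N O) (f : PersHom M N) :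
    PersHom M O :=
  ⟨fun a => (g.1 a).comp (f.1 a), by
    intro a b h
    rw [← LinearMap.comp_assoc, g.2 h, LinearMap.comp_assoc, f.2 h, LinearMap.comp_assoc]⟩

def IsMonoP {M N : PersMod k P} (f : PersHom M N) : Prop :=
  ∀ a : P, Function.Injective (f.1 a)

def IsEpiP {M N : PersMod k P} (f : PersHom M N) : Prop :=
  ∀ a : P, Function.Surjective (f.1 a)

def IsIsoP {M N : PersMod k P} (f : PersHom M N) : Prop :=
  ∀ a : P, Function.Bijective (f.1 a)

/-- Convexity of a subset of the poset. -/
def IsConvexSet (I : Set P) : Prop :=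
  ∀ ⦃a b c : P⦄, a ∈ I → c ∈ I → a ≤ b → b ≤ c → b ∈ I

/-- Zigzag-connectivity of a subset of the poset. -/
def IsConnectedSet (I : Set P) : Prop :=
  I.Nonempty ∧ ∀ a ∈ I, ∀ b ∈ I,
    Relation.ReflTransGen (fun x y => x ∈ I ∧ y ∈ I ∧ (x ≤ y ∨ y ≤ x)) a b

/-- An interval of the poset: a connected convex subset. -/
def IsIntervalSet (I : Set P) : Prop := IsConvexSet I ∧ IsConnectedSet I

/-- The underlying linear map of the interval module. -/
noncomputable def intervalMap (I : Set P) (a b : P) :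
    ↥(if a ∈ I then (⊤ : Submodule k k) else ⊥) →ₗ[k]
      ↥(if b ∈ I then (⊤ : Submodule k k) else ⊥) where
  toFun v := ⟨if a ∈ I ∧ b ∈ I then (v : k) else 0, by
    by_cases hb : b ∈ I
    · simp [hb]
    · have hab : ¬(a ∈ I ∧ b ∈ I) := fun h' => hb h'.2
      rw [if_neg hab]; exact Submodule.zero_mem _⟩
  map_add' v w := by
    apply Subtype.ext
    by_cases h' : a ∈ I ∧ b ∈ I <;> simp [h']
  map_smul' c v := by
    apply Subtype.ext
    by_cases h' : a ∈ I ∧ b ∈ I <;> simp [h']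

@[simp] lemma intervalMap_coe (I : Set P) (a b : P)
    (v : ↥(if a ∈ I then (⊤ : Submodule k k) else ⊥)) :
    ((intervalMap I a b v : ↥(if b ∈ I then (⊤ : Submodule k k) else ⊥)) : k)
      = if a ∈ I ∧ b ∈ I then (v : k) else 0 := rfl

lemma intervalMem_zero {I : Set P} {a : P} (ha : a ∉ I)
    (v : ↥(if a ∈ I then (⊤ : Submodule k k) else ⊥)) : (v : k) = 0 := by
  obtain ⟨x, hx⟩ := v
  rw [if_neg ha] at hx
  exact (Submodule.mem_bot k).1 hx

/-- The interval module `V_I` associated to a convex subset `I`. -/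
noncomputable def intervalMod (I : Set P) (hI : IsConvexSet I) : PersMod k P where
  V a := ↥(if a ∈ I then (⊤ : Submodule k k) else ⊥)
  map {a b} _ := intervalMap I a b
  map_id a := by
    ext v
    rw [intervalMap_coe]
    by_cases ha : a ∈ I
    · simp [ha]
    · rw [if_neg (fun h' : a ∈ I ∧ a ∈ I => ha h'.1), LinearMap.id_apply, intervalMem_zero ha v]
  map_comp {a b c} h₁ h₂ := by
    ext v
    rw [LinearMap.comp_apply, intervalMap_coe, intervalMap_coe, intervalMap_coe]
    by_cases ha : a ∈ I <;> by_cases hb : b ∈ I <;> by_cases hc : c ∈ I <;>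
      first
        | (exact absurd (hI ha hc h₁ h₂) hb)
        | simp [ha, hb, hc]

/-- Finite direct sums of persistence modules. -/
noncomputable def dSum {ι : Type} (M : ι → PersMod k P) : PersMod k P where
  V a := ∀ i, (M i).V a
  map {a b} h := LinearMap.pi fun i => ((M i).map h).comp (LinearMap.proj i)
  map_id a := by
    refine LinearMap.ext fun v => ?_
    funext i
    simp [LinearMap.pi_apply, (M i).map_id]
  map_comp {a b c} h₁ h₂ := by
    refine LinearMap.ext fun v => ?_
    funext i
    simpa [LinearMap.pi_apply] using LinearMap.congr_fun ((M i).map_comp h₁ h₂) (v i)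

/-- A persistence module is interval decomposable if it is isomorphic to a finite
direct sum of interval modules. -/
def IntervalDecomposable (W : PersMod k P) : Prop :=
  ∃ (n : ℕ) (J : Fin n → Set P) (hJ : ∀ i, IsIntervalSet (J i))
    (e : PersHom W (dSum fun i => intervalMod (J i) (hJ i).1)), IsIsoP e

/-- The combined morphism `⊕ᵢ Mᵢ → N` of a finite family of morphisms `Mᵢ → N`. -/
noncomputable def combineHom {ι : Type} [Fintype ι] {Mf : ι → PersMod k P}
    {N : PersMod k P} (f : ∀ i, PersHom (Mf i) N) : PersHom (dSum Mf) N :=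
  ⟨fun a => ∑ i, ((f i).1 a).comp (LinearMap.proj i), by
    intro a b h
    refine LinearMap.ext fun v => ?_
    simp only [LinearMap.comp_apply, LinearMap.sum_apply, LinearMap.proj_apply, map_sum]
    refine Finset.sum_congr rfl fun i _ => ?_
    have := LinearMap.congr_fun ((f i).2 h) (v i)
    exact this⟩

section Aux

variable {k P : Type} [Field k] [PartialOrder P]

/-- Evaluation of an element of the interval module at a point, as a linear map to `k`. -/
noncomputable def ival (I : Set P) (hI : IsConvexSet I) (a : P) :
    (intervalMod (k := k) I hI).V a →ₗ[k] k :=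
  Submodule.subtype (if a ∈ I then (⊤ : Submodule k k) else ⊥)

lemma ival_injective (I : Set P) (hI : IsConvexSet I) (a : P) :
    Function.Injective (ival (k := k) I hI a) :=
  Subtype.val_injective

lemma ival_eq_zero (I : Set P) (hI : IsConvexSet I) {a : P} (ha : a ∉ I)
    (v : (intervalMod (k := k) I hI).V a) : ival I hI a v = 0 :=
  intervalMem_zero ha v

/-- Naturality of a morphism into the interval module, read in `k`. -/
lemma f_nat (I : Set P) (hI : IsConvexSet I) (W : PersMod k P)
    (f : PersHom W (intervalMod (k := k) I hI)) {a b : P} (h : a ≤ b) (x : W.V a) :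
    ival I hI b (f.1 b (W.map h x))
      = if a ∈ I ∧ b ∈ I then ival I hI a (f.1 a x) else 0 := by
  have h1 := LinearMap.congr_fun (f.2 h) x
  have h2 : f.1 b (W.map h x) = intervalMap (k := k) I a b (f.1 a x) := h1.symm
  rw [h2]
  exact intervalMap_coe I a b (f.1 a x)

/-- Component map of the candidate isomorphism: project `W` through `f` into the
interval summand indexed by a component `J`. -/
noncomputable def toComp (I : Set P) (hI : IsConvexSet I) (W : PersMod k P)
    (f : PersHom W (intervalMod (k := k) I hI)) (J : Set P) (a : P) :
    W.V a →ₗ[k] ↥(if a ∈ J then (⊤ : Submodule k k) else ⊥) where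
  toFun x := ⟨if a ∈ J then ival I hI a (f.1 a x) else 0, by
    by_cases h : a ∈ J
    · simp [h]
    · rw [if_neg h, if_neg h]; exact Submodule.zero_mem (⊥ : Submodule k k)⟩
  map_add' x y := by
    apply Subtype.ext
    by_cases h : a ∈ J <;> simp [h]
  map_smul' c x := by
    apply Subtype.ext
    by_cases h : a ∈ J <;> simp [h]

@[simp] lemma toComp_coe (I : Set P) (hI : IsConvexSet I) (W : PersMod k P)
    (f : PersHom W (intervalMod (k := k) I hI)) (J : Set P) (a : P) (x : W.V a) :
    ((toComp I hI W f J a x : ↥(if a ∈ J then (⊤ : Submodule k k) else ⊥)) : k)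
      = if a ∈ J then ival I hI a (f.1 a x) else 0 := rfl

end Aux

/-- Over the incidence algebra of a finite poset (presented by an acyclic
quiver with full commutativity relations), every submodule `W` of an interval module
`V_I` is interval decomposable. -/
theorem submodule_of_interval_module_is_interval_decomposable
    {k P : Type} [Field k] [PartialOrder P] [Fintype P]
    (I : Set P) (hI : IsIntervalSet I) (W : PersMod k P)
    (hW : ∃ f : PersHom W (intervalMod I hI.1), IsMonoP f) :
    IntervalDecomposable W := by
  classical
  obtain ⟨f, hf⟩ := hW
  set S : Set P := {a | ∃ x : W.V a, x ≠ 0} with hSdef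
  have hzero : ∀ {a : P}, a ∉ S → ∀ x : W.V a, x = 0 := by
    intro a ha x
    by_contra hx
    exact ha ⟨x, hx⟩
  have hSI : S ⊆ I := by
    rintro a ⟨x, hx⟩
    by_contra ha
    apply hx
    apply hf a
    rw [map_zero]
    exact ival_injective I hI.1 a (by rw [ival_eq_zero I hI.1 ha, map_zero])
  have hfne : ∀ {a : P}, a ∈ S → ∃ x : W.V a, ival I hI.1 a (f.1 a x) ≠ 0 := by
    rintro a ⟨x, hx⟩
    refine ⟨x, fun h0 => hx ?_⟩
    apply hf a
    rw [map_zero]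
    exact ival_injective I hI.1 a (by rw [h0, map_zero])
  have hup : ∀ {a b : P}, a ∈ S → a ≤ b → b ∈ I → b ∈ S := by
    intro a b ha hab hb
    obtain ⟨x, hx⟩ := hfne ha
    refine ⟨W.map hab x, fun h0 => hx ?_⟩
    have hn := f_nat I hI.1 W f hab x
    rw [h0, map_zero, map_zero, if_pos ⟨hSI ha, hb⟩] at hn
    exact hn.symm
  -- zigzag components of the support
  let step : P → P → Prop := fun x y => x ∈ S ∧ y ∈ S ∧ (x ≤ y ∨ y ≤ x)
  have hsymm : Symmetric step := fun x y h => ⟨h.2.1, h.1, h.2.2.symm⟩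
  let s : Setoid ↥S := ⟨fun a b => Relation.ReflTransGen step a.1 b.1,
    ⟨fun a => Relation.ReflTransGen.refl,
     fun h => (@Relation.ReflTransGen.stdSymm _ step ⟨fun _ _ h' => hsymm h'⟩).symm _ _ h,
     fun h1 h2 => h1.trans h2⟩⟩
  haveI : Finite ↥S := Subtype.finite
  haveI : Finite (Quotient s) := Quotient.finite s
  obtain ⟨n, ⟨eQ⟩⟩ := Finite.exists_equiv_fin (Quotient s)
  let J : Fin n → Set P := fun i => {a | ∃ h : a ∈ S, eQ ⟦(⟨a, h⟩ : ↥S)⟧ = i}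
  have hJS : ∀ i, J i ⊆ S := fun i a ha => ha.1
  have hmem : ∀ {a : P} (ha : a ∈ S), a ∈ J (eQ ⟦(⟨a, ha⟩ : ↥S)⟧) := fun ha => ⟨ha, rfl⟩
  have huniq : ∀ {a : P} {i i' : Fin n}, a ∈ J i → a ∈ J i' → i = i' := by
    rintro a i i' ⟨h1, e1⟩ ⟨h2, e2⟩
    rw [← e1, ← e2]
  have hnext : ∀ {a b : P} {i : Fin n}, a ∈ J i → step a b → b ∈ J i := by
    rintro a b i ⟨ha, hei⟩ hs
    refine ⟨hs.2.1, ?_⟩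
    rw [← hei]
    exact congrArg eQ (Quotient.sound (Relation.ReflTransGen.single (hsymm hs)))
  have hJconv : ∀ i, IsConvexSet (J i) := by
    intro i a b c ha hc hab hbc
    have hbI : b ∈ I := hI.1 (hSI (hJS i ha)) (hSI (hJS i hc)) hab hbc
    have hbS : b ∈ S := hup (hJS i ha) hab hbI
    exact hnext ha ⟨hJS i ha, hbS, Or.inl hab⟩
  have hJint : ∀ i, IsIntervalSet (J i) := by
    intro i
    refine ⟨hJconv i, ?_, ?_⟩
    · obtain ⟨q, hq⟩ := Quotient.exists_rep (eQ.symm i)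
      refine ⟨q.1, q.2, ?_⟩
      have : (⟦(⟨q.1, q.2⟩ : ↥S)⟧ : Quotient s) = ⟦q⟧ := rfl
      rw [this, hq, Equiv.apply_symm_apply]
    · intro a ha b hb
      obtain ⟨haS, hia⟩ := ha
      obtain ⟨hbS, hib⟩ := hb
      have heq : (⟦(⟨a, haS⟩ : ↥S)⟧ : Quotient s) = ⟦⟨b, hbS⟩⟧ :=
        eQ.injective (hia.trans hib.symm)
      have hr : Relation.ReflTransGen step a b := Quotient.exact heq
      have key : ∀ c, Relation.ReflTransGen step a c → c ∈ J i ∧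
          Relation.ReflTransGen (fun x y => x ∈ J i ∧ y ∈ J i ∧ (x ≤ y ∨ y ≤ x)) a c := by
        intro c hc
        induction hc with
        | refl => exact ⟨⟨haS, hia⟩, Relation.ReflTransGen.refl⟩
        | tail h1 h2 ih =>
            have hd := hnext ih.1 h2
            exact ⟨hd, ih.2.tail ⟨ih.1, hd, h2.2.2⟩⟩
      exact (key b hr).2
  refine ⟨n, J, hJint,
    ⟨fun a => LinearMap.pi fun i => toComp I hI.1 W f (J i) a, ?_⟩, ?_⟩
  · -- naturality
    intro a b h
    refine LinearMap.ext fun x => ?_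
    funext i
    show intervalMap (J i) a b (toComp I hI.1 W f (J i) a x)
        = toComp I hI.1 W f (J i) b (W.map h x)
    apply Subtype.ext
    rw [intervalMap_coe, toComp_coe, toComp_coe]
    by_cases hb : b ∈ J i
    · by_cases ha : a ∈ J i
      · have haI : a ∈ I := hSI (hJS i ha)
        have hbI : b ∈ I := hSI (hJS i hb)
        rw [f_nat I hI.1 W f h x]
        simp [ha, hb, haI, hbI]
      · have haS : a ∉ S := fun haS => ha (hnext hb ⟨hJS i hb, haS, Or.inr h⟩)
        have hx0 : x = 0 := hzero haS x
        simp [ha, hb, hx0]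
    · simp [hb, fun (h' : a ∈ J i ∧ b ∈ J i) => hb h'.2]
  · -- isomorphism at each point
    intro a
    by_cases haS : a ∈ S
    · have hai : a ∈ J (eQ ⟦(⟨a, haS⟩ : ↥S)⟧) := hmem haS
      set i₀ := eQ ⟦(⟨a, haS⟩ : ↥S)⟧ with hi₀
      obtain ⟨x₀, hx₀⟩ := hfne haS
      constructor
      · intro x y hxy
        have h1 : toComp I hI.1 W f (J i₀) a x = toComp I hI.1 W f (J i₀) a y :=
          congr_fun hxy i₀
        have h2 : ival I hI.1 a (f.1 a x) = ival I hI.1 a (f.1 a y) := by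
          have h3 := congrArg Subtype.val h1
          rw [toComp_coe, toComp_coe, if_pos hai, if_pos hai] at h3
          exact h3
        exact hf a (ival_injective I hI.1 a h2)
      · intro y
        set c : k := ival (J i₀) (hJint i₀).1 a (y i₀) with hc
        refine ⟨(c / ival I hI.1 a (f.1 a x₀)) • x₀, ?_⟩
        funext i
        show toComp I hI.1 W f (J i) a ((c / ival I hI.1 a (f.1 a x₀)) • x₀) = y i
        apply Subtype.ext
        rw [toComp_coe]
        by_cases hi : i = i₀
        · subst hi
          rw [if_pos hai, map_smul, map_smul]
          show (c / ival I hI.1 a (f.1 a x₀)) * ival I hI.1 a (f.1 a x₀) = _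
          rw [div_mul_cancel₀ c hx₀]
          rfl
        · have hani : a ∉ J i := fun h' => hi (huniq h' hai)
          rw [if_neg hani]
          exact (intervalMem_zero hani (y i)).symm
    · have hJa : ∀ i, a ∉ J i := fun i h' => haS (hJS i h')
      constructor
      · intro x y _
        rw [hzero haS x, hzero haS y]
      · intro y
        refine ⟨0, ?_⟩
        funext i
        show toComp I hI.1 W f (J i) a 0 = y i
        apply Subtype.ext
        rw [map_zero]
        exact (intervalMem_zero (hJa i) (y i)).symm
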